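/- No nonzero element of h is diagonalizable: if X ∈ span_ℂ{X1, X2, X3}, X ≠ 0, then the linear endomorphism of ℂ⁴ defined by X is not diagonalizable. In particular h contains no nonzero semisimple element, so h admits no decomposition as (nilpotent ideal) ⊕ (nonzero central subalgebra of semisimple elements). -/

import Mathlib

open Matrix

noncomputable section

def X1 (α β : ℂ) : Matrix (Fin 4) (Fin 4) ℂ :=
  !![1,1,0,1; 1,1,0,0; α,β,0,0; 0,0,0,0]

def X2 (α β : ℂ) : Matrix (Fin 4) (Fin 4) ℂ :=
  !![1,1,0,0; 1,1,0,1; β-1,α+1,0,0; 0,0,0,0]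

def X3 : Matrix (Fin 4) (Fin 4) ℂ :=
  !![0,0,0,0; 0,0,0,0; 0,0,0,1; 0,0,0,0]

/-- The ℂ-linear span of {X1, X2, X3}. -/
def h (α β : ℂ) : Submodule ℂ (Matrix (Fin 4) (Fin 4) ℂ) :=
  Submodule.span ℂ {X1 α β, X2 α β, X3}
/-- A matrix is diagonalizable if it is conjugate to a diagonal matrix. -/
def IsDiagonalizable {n : ℕ} (A : Matrix (Fin n) (Fin n) ℂ) : Prop :=
  ∃ P : Matrix (Fin n) (Fin n) ℂ, IsUnit P ∧ (P⁻¹ * A * P).IsDiag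

theorem det_fin_four' {R : Type*} [CommRing R] (A : Matrix (Fin 4) (Fin 4) R) :
    det A =
      A 0 0 * (A 1 1 * A 2 2 * A 3 3 - A 1 1 * A 2 3 * A 3 2 - A 1 2 * A 2 1 * A 3 3
        + A 1 2 * A 2 3 * A 3 1 + A 1 3 * A 2 1 * A 3 2 - A 1 3 * A 2 2 * A 3 1)
      - A 0 1 * (A 1 0 * A 2 2 * A 3 3 - A 1 0 * A 2 3 * A 3 2 - A 1 2 * A 2 0 * A 3 3
        + A 1 2 * A 2 3 * A 3 0 + A 1 3 * A 2 0 * A 3 2 - A 1 3 * A 2 2 * A 3 0)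
      + A 0 2 * (A 1 0 * A 2 1 * A 3 3 - A 1 0 * A 2 3 * A 3 1 - A 1 1 * A 2 0 * A 3 3
        + A 1 1 * A 2 3 * A 3 0 + A 1 3 * A 2 0 * A 3 1 - A 1 3 * A 2 1 * A 3 0)
      - A 0 3 * (A 1 0 * A 2 1 * A 3 2 - A 1 0 * A 2 2 * A 3 1 - A 1 1 * A 2 0 * A 3 2
        + A 1 1 * A 2 2 * A 3 0 + A 1 2 * A 2 0 * A 3 1 - A 1 2 * A 2 1 * A 3 0) := by
  rw [det_succ_row_zero, Fin.sum_univ_four]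
  norm_num [det_fin_three, submatrix_apply, Fin.succAbove, Fin.lt_def,
    show (Fin.succ 2 : Fin 4) = 3 from rfl, show (Fin.castSucc 2 : Fin 4) = 2 from rfl,
    show ((3:Fin 4):ℕ) = 3 from rfl]
  ring

theorem one_fin_four {R : Type*} [Zero R] [One R] :
    (1 : Matrix (Fin 4) (Fin 4) R) = !![1,0,0,0; 0,1,0,0; 0,0,1,0; 0,0,0,1] := by
  ext i j
  fin_cases i <;> fin_cases j <;> rfl

theorem detM (α β a b c t : ℂ) :
    det (!![a+b-t, a+b, 0, a; a+b, a+b-t, 0, b;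
        a*α + b*(β-1), a*β + b*(α+1), -t, c; 0, 0, 0, -t]) = t^3*(t-2*(a+b)) := by
  rw [det_fin_four']
  simp [Matrix.vecHead, Matrix.vecTail]
  ring

set_option maxHeartbeats 1000000 in
/-- No nonzero element of h is diagonalizable. -/
theorem no_nonzero_semisimple_in_h (α β : ℂ) (hαβ : α + β ≠ 0) :
    ∀ X ∈ h α β, X ≠ 0 → ¬ IsDiagonalizable X := by
  intro X hX hX0 hdiag
  obtain ⟨P, hP, hD⟩ := hdiag
  have hPdet : IsUnit P.det := (Matrix.isUnit_iff_isUnit_det P).mp hP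
  rw [h, Submodule.mem_span_insert] at hX
  obtain ⟨a, z, hz, hXeq⟩ := hX
  rw [Submodule.mem_span_pair] at hz
  obtain ⟨b, c, rfl⟩ := hz
  subst hXeq
  set M : Matrix (Fin 4) (Fin 4) ℂ := a • X1 α β + (b • X2 α β + c • X3) with hMdef
  set s : ℂ := a + b with hs
  set d : Fin 4 → ℂ := Matrix.diag (P⁻¹ * M * P) with hd
  have hDeq : Matrix.diagonal d = P⁻¹ * M * P := hD.diagonal_diag
  have hM : M = P * Matrix.diagonal d * P⁻¹ := by
    rw [hDeq, show P * (P⁻¹ * M * P) * P⁻¹ = (P * P⁻¹) * M * (P * P⁻¹) by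
      noncomm_ring, Matrix.mul_nonsing_inv _ hPdet, Matrix.one_mul, Matrix.mul_one]
  -- entries of M as an explicit matrix
  have hMex : M = !![s, s, 0, a; s, s, 0, b;
      a*α + b*(β-1), a*β + b*(α+1), 0, c; 0, 0, 0, 0] := by
    ext i j
    fin_cases i <;> fin_cases j <;>
      simp [hMdef, X1, X2, X3, hs, Matrix.vecHead, Matrix.vecTail] <;> ring
  -- the characteristic values
  have hdet : ∀ t : ℂ, (M - t • 1).det = (d 0 - t) * ((d 1 - t) * ((d 2 - t) * (d 3 - t))) := by
    intro t
    have h1 : M - t • 1 = P * (Matrix.diagonal (fun i => d i - t)) * P⁻¹ := by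
      rw [hM]
      rw [show (Matrix.diagonal (fun i => d i - t) : Matrix (Fin 4) (Fin 4) ℂ)
          = Matrix.diagonal d - t • 1 by
        rw [Matrix.smul_one_eq_diagonal, Matrix.diagonal_sub]]
      rw [Matrix.mul_sub, Matrix.sub_mul, Matrix.mul_smul, Matrix.mul_one,
        Matrix.smul_mul, Matrix.mul_nonsing_inv _ hPdet]
    rw [h1, Matrix.det_mul, Matrix.det_mul, Matrix.det_diagonal, Matrix.det_nonsing_inv, Ring.inverse_eq_inv]
    rw [Fin.prod_univ_four]
    field_simp [hPdet.ne_zero]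
  have hpoly : ∀ t : ℂ, (M - t • 1).det = t^3 * (t - 2*s) := by
    intro t
    have e : M - t • 1 = !![s - t, s, 0, a; s, s - t, 0, b;
        a*α + b*(β-1), a*β + b*(α+1), -t, c; 0, 0, 0, -t] := by
      rw [hMex, one_fin_four]
      ext i j
      fin_cases i <;> fin_cases j <;>
        simp [Matrix.vecHead, Matrix.vecTail, Function.comp]
    rw [e, hs]
    exact detM α β a b c t
  -- each d j is a root of t^3 (t - 2s)
  have hroot : ∀ j : Fin 4, d j = 0 ∨ d j = 2 * s := by
    intro j
    have h0 : (M - d j • 1).det = 0 := by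
      rw [hdet (d j)]
      fin_cases j <;> simp
    rw [hpoly] at h0
    rcases mul_eq_zero.mp h0 with h | h
    · exact Or.inl (pow_eq_zero_iff (by norm_num) |>.mp h)
    · exact Or.inr (sub_eq_zero.mp h)
  by_cases hs0 : s = 0
  · -- then all eigenvalues are 0, so M = 0, contradiction
    have hd0 : d = 0 := by
      funext j
      simp only [Pi.zero_apply]
      rcases hroot j with h' | h'
      · exact h'
      · rw [h', hs0]; ring
    apply hX0
    rw [hM, hd0, show Matrix.diagonal (0 : Fin 4 → ℂ) = 0 from Matrix.diagonal_zero,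
      Matrix.mul_zero, Matrix.zero_mul]
  · -- M * M = 2s M, extract entries
    have hDsq : Matrix.diagonal d * Matrix.diagonal d = (2*s) • Matrix.diagonal d := by
      have hfun : (fun i => d i * d i) = (2*s) • d := by
        funext i
        rcases hroot i with h' | h' <;>
          simp [h', Pi.smul_apply, smul_eq_mul] <;> ring
      rw [Matrix.diagonal_mul_diagonal, hfun, Matrix.diagonal_smul]
    have hM2 : M * M = (2*s) • M := by
      have h1 : M * M = P * (Matrix.diagonal d * Matrix.diagonal d) * P⁻¹ := by
        conv_lhs => rw [hM]
        rw [show P * Matrix.diagonal d * P⁻¹ * (P * Matrix.diagonal d * P⁻¹)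
            = P * (Matrix.diagonal d * (P⁻¹ * P) * Matrix.diagonal d) * P⁻¹ by
          simp only [Matrix.mul_assoc], Matrix.nonsing_inv_mul _ hPdet, Matrix.mul_one]
      rw [h1, hDsq, Matrix.mul_smul, Matrix.smul_mul, ← hM]
    rw [hMex] at hM2
    have E1 := congrFun (congrFun hM2 0) 3
    have E3 := congrFun (congrFun hM2 2) 0
    simp [Matrix.mul_apply, Fin.sum_univ_four, Matrix.smul_apply, smul_eq_mul] at E1 E3
    have e1 : s*b - s*a = 0 := by linear_combination E1
    have e3 : s*(a*β + b*(α+1)) - s*(a*α + b*(β-1)) = 0 := by linear_combination E3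
    have hss : s * s = 0 := by linear_combination e3 + (β - α - 1) * e1
    exact hs0 (mul_self_eq_zero.mp hss)
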